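/- arXiv:0912.0582 — 3 statements merged into one kernel-verified Lean document; each statement's English description precedes it below -/
import Mathlib

section
/- If f : X → Y is orthogonal to B for all L-local groups B, then f is an L-equivalence. -/
-- preamble for localization-based statements
open CategoryTheory Cardinal

/-- A localization functor on the category of abelian groups: a functor `L`
with a natural transformation `unit : Id ⟶ L` such that `unit.app (L X) = L.map (unit.app X)`
and this map is an isomorphism. -/
structure AbLocalization where
  L : AddCommGrpCat ⥤ AddCommGrpCat
  unit : 𝟭 AddCommGrpCat ⟶ L
  unit_app_eq_map : ∀ X : AddCommGrpCat, unit.app (L.obj X) = L.map (unit.app X)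
  isIso_unit_app : ∀ X : AddCommGrpCat, IsIso (unit.app (L.obj X))

/-- `B` is `L`-local if the unit map at `B` is an isomorphism. -/
def AbLocalization.Local (T : AbLocalization) (B : AddCommGrpCat) : Prop :=
  IsIso (T.unit.app B)

/-- `f` is an `L`-equivalence if `L f` is an isomorphism. -/
def AbLocalization.Equiv (T : AbLocalization) {X Y : AddCommGrpCat} (f : X ⟶ Y) : Prop :=
  IsIso (T.L.map f)

/-- `f : X ⟶ Y` is orthogonal to `B` if precomposition with `f` gives a bijection
`Hom(Y,B) → Hom(X,B)`. -/
def Orthogonal {X Y : AddCommGrpCat} (f : X ⟶ Y) (B : AddCommGrpCat) : Prop :=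
  Function.Bijective (fun g : Y ⟶ B => f ≫ g)
/-- If `f ⊥ B` for every `L`-local group `B`, then `f` is an `L`-equivalence. -/
theorem equivalence_of_orthogonal_all_local (T : AbLocalization) {X Y : AddCommGrpCat} (f : X ⟶ Y)
    (h : ∀ B : AddCommGrpCat, T.Local B → Orthogonal f B) : T.Equiv f := by
  -- L X and L Y are local
  have hLX : T.Local (T.L.obj X) := T.isIso_unit_app X
  have hLY : T.Local (T.L.obj Y) := T.isIso_unit_app Y
  haveI : IsIso (T.unit.app (T.L.obj Y)) := hLY
  haveI : IsIso (T.unit.app (T.L.obj X)) := T.isIso_unit_app X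
  -- key: for B local, precomposition with the unit is injective on maps L Y ⟶ B
  have key : ∀ (B : AddCommGrpCat) (_ : T.Local B) (k k' : T.L.obj Y ⟶ B),
      T.unit.app Y ≫ k = T.unit.app Y ≫ k' → k = k' := by
    intro B hB k k' hkk
    haveI : IsIso (T.unit.app B) := hB
    have e : ∀ (k : T.L.obj Y ⟶ B), k = T.L.map (T.unit.app Y ≫ k) ≫ inv (T.unit.app B) := by
      intro k
      have := T.unit.naturality k
      simp only [Functor.id_map] at this
      rw [T.unit_app_eq_map Y, ← T.L.map_comp] at this
      rw [← this]
      simp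
    rw [e k, e k', hkk]
  -- get g : Y ⟶ L X with f ≫ g = unit X
  obtain ⟨g, hg⟩ := (h (T.L.obj X) hLX).2 (T.unit.app X)
  dsimp at hg
  -- candidate inverse
  refine ⟨T.L.map g ≫ inv (T.unit.app (T.L.obj X)), ?_, ?_⟩
  · rw [← Category.assoc, ← T.L.map_comp, hg, ← T.unit_app_eq_map, IsIso.hom_inv_id]
  · -- g ≫ L f = unit Y
    have hgf : g ≫ T.L.map f = T.unit.app Y := by
      apply (h (T.L.obj Y) hLY).1
      dsimp
      have natf := T.unit.naturality f
      simp only [Functor.id_map] at natf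
      rw [← Category.assoc, hg, ← natf]
    -- conclude via key
    apply key (T.L.obj Y) hLY
    have natg := T.unit.naturality g
    simp only [Functor.id_map] at natg
    rw [Category.comp_id, ← Category.assoc, ← Category.assoc, ← natg]
    simp [hgf]
end

section
/- If the direct sum ⊕_κ D of κ copies of an abelian group D is L-local for some infinite cardinal κ, then ⊕_α D is L-local for every infinite cardinal α. -/
-- preamble for localization-based statements
open CategoryTheory Cardinal

/-- `D^ι_{<λ}`: the subgroup of `∏_ι D` of elements whose support has cardinality `< lam`,
for an infinite cardinal `lam`. -/
def boundedSupport (ι : Type) (D : Type) [AddCommGroup D] (lam : Cardinal)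
    (hlam : Cardinal.aleph0 ≤ lam) : AddSubgroup (ι → D) where
  carrier := {x | Cardinal.mk {i | x i ≠ 0} < lam}
  zero_mem' := by
    have h : {i : ι | (0 : ι → D) i ≠ 0} = ∅ := by ext i; simp
    simp only [Set.mem_setOf_eq, h, Cardinal.mk_emptyCollection]
    exact lt_of_lt_of_le Cardinal.aleph0_pos hlam
  add_mem' := by
    intro x y hx hy
    have hsub : {i : ι | (x + y) i ≠ 0} ⊆ {i | x i ≠ 0} ∪ {i | y i ≠ 0} := by
      intro i hi
      by_contra h
      simp only [Set.mem_union, Set.mem_setOf_eq, not_or, not_not] at h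
      exact hi (by simp [Pi.add_apply, h.1, h.2])
    calc Cardinal.mk {i : ι | (x + y) i ≠ 0}
        ≤ Cardinal.mk ↥({i : ι | x i ≠ 0} ∪ {i | y i ≠ 0}) := Cardinal.mk_le_mk_of_subset hsub
      _ ≤ Cardinal.mk {i : ι | x i ≠ 0} + Cardinal.mk {i : ι | y i ≠ 0} := Cardinal.mk_union_le _ _
      _ < lam := Cardinal.add_lt_of_lt hlam hx hy
  neg_mem' := by
    intro x hx
    have h : {i : ι | (-x) i ≠ 0} = {i | x i ≠ 0} := by ext i; simp
    simpa only [Set.mem_setOf_eq, h] using hx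

/-! ### Auxiliary material -/

section Aux

/-- Abbreviation for the finite-support direct sum subgroup. -/
abbrev dirSum (ι : Type) (D : Type) [AddCommGroup D] : AddSubgroup (ι → D) :=
  boundedSupport ι D Cardinal.aleph0 le_rfl

variable {ι ι' D : Type} [AddCommGroup D]

lemma mem_dirSum_iff {x : ι → D} : x ∈ dirSum ι D ↔ {i | x i ≠ 0}.Finite := by
  show Cardinal.mk {i | x i ≠ 0} < Cardinal.aleph0 ↔ _
  exact Cardinal.lt_aleph0_iff_set_finite

/-- Restriction along an injective map, as a hom of direct sums. -/
def restrictHom (u : ι' → ι) (hu : Function.Injective u) :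
    ↥(dirSum ι D) →+ ↥(dirSum ι' D) where
  toFun x := ⟨fun n => x.1 (u n), by
    apply mem_dirSum_iff.2
    have hx : {i | x.1 i ≠ 0}.Finite := mem_dirSum_iff.1 x.2
    have hsub : {n | x.1 (u n) ≠ 0} ⊆ u ⁻¹' {i | x.1 i ≠ 0} := fun n h => h
    exact ((hx.preimage (hu.injOn)).subset hsub)⟩
  map_zero' := Subtype.ext rfl
  map_add' x y := Subtype.ext rfl

lemma extend_zero_pt (u : ι' → ι) (i : ι) :
    Function.extend u (0 : ι' → D) (0 : ι → D) i = 0 := by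
  classical
  rw [Function.extend_def]
  split <;> rfl

lemma extend_add_pt (u : ι' → ι) (x y : ι' → D) (i : ι) :
    Function.extend u (x + y) 0 i = Function.extend u x 0 i + Function.extend u y 0 i := by
  classical
  rw [Function.extend_def, Function.extend_def, Function.extend_def]
  split <;> simp

/-- Extension by zero along an injective map. -/
noncomputable def extendHom (u : ι' → ι) (hu : Function.Injective u) :
    ↥(dirSum ι' D) →+ ↥(dirSum ι D) where
  toFun x := ⟨Function.extend u x.1 0, by
    apply mem_dirSum_iff.2
    have hx : {n | x.1 n ≠ 0}.Finite := mem_dirSum_iff.1 x.2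
    refine (hx.image u).subset ?_
    intro i hi
    simp only [Set.mem_setOf_eq] at hi
    rcases em (∃ n, u n = i) with h | h
    · obtain ⟨n, hn⟩ := h
      subst hn
      rw [hu.extend_apply] at hi
      exact ⟨n, hi, rfl⟩
    · exact absurd (by classical rw [Function.extend_def]; simp [h]) hi⟩
  map_zero' := Subtype.ext (by funext i; exact extend_zero_pt u i)
  map_add' x y := Subtype.ext (by
    funext i
    exact extend_add_pt u x.1 y.1 i)

lemma restrict_extend (u : ι' → ι) (hu : Function.Injective u) (x : ↥(dirSum ι' D)) :
    restrictHom u hu (extendHom u hu x) = x := by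
  apply Subtype.ext
  funext n
  exact hu.extend_apply _ _ n

/-- Evaluation at a point as a hom. -/
def evalHom (i : ι) : ↥(dirSum ι D) →+ D where
  toFun x := x.1 i
  map_zero' := rfl
  map_add' _ _ := rfl

/-- Single element supported at `i₀`. -/
def singleHom [DecidableEq ι] (i₀ : ι) : D →+ ↥(dirSum ι D) where
  toFun d := ⟨fun i => if i = i₀ then d else 0, by
    apply mem_dirSum_iff.2
    refine (Set.finite_singleton i₀).subset ?_
    intro i hi
    simp only [Set.mem_setOf_eq] at hi
    by_contra h
    simp only [Set.mem_singleton_iff] at h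
    exact hi (if_neg h)⟩
  map_zero' := Subtype.ext (by funext i; simp)
  map_add' a b := Subtype.ext (by funext i; by_cases h : i = i₀ <;> simp [h])

namespace AbLocalization

variable (T : AbLocalization)

lemma isIso_L_map_unit (X : AddCommGrpCat) : IsIso (T.L.map (T.unit.app X)) := by
  rw [← T.unit_app_eq_map]
  exact T.isIso_unit_app X

/-- Maps into a local group lift uniquely along the unit. -/
lemma lift_existsUnique {A B : AddCommGrpCat} (hB : T.Local B) (φ : A ⟶ B) :
    ∃! g : T.L.obj A ⟶ B, T.unit.app A ≫ g = φ := by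
  have hA : IsIso (T.L.map (T.unit.app A)) := T.isIso_L_map_unit A
  have hB' : IsIso (T.unit.app B) := hB
  have hnat : φ ≫ T.unit.app B = T.unit.app A ≫ T.L.map φ := T.unit.naturality φ
  refine ⟨T.L.map φ ≫ inv (T.unit.app B), ?_, ?_⟩
  · show T.unit.app A ≫ T.L.map φ ≫ inv (T.unit.app B) = φ
    rw [← Category.assoc, ← hnat, Category.assoc, IsIso.hom_inv_id, Category.comp_id]
  · intro g hg
    have hgnat : g ≫ T.unit.app B = T.unit.app (T.L.obj A) ≫ T.L.map g := T.unit.naturality g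
    have h1 : T.L.map g = inv (T.L.map (T.unit.app A)) ≫ T.L.map φ := by
      rw [← hg, T.L.map_comp, IsIso.inv_hom_id_assoc]
    have h3 : T.unit.app (T.L.obj A) = T.L.map (T.unit.app A) := T.unit_app_eq_map A
    have key : g ≫ T.unit.app B = T.L.map φ := by
      rw [hgnat, h3, h1, IsIso.hom_inv_id_assoc]
    rw [← cancel_mono (T.unit.app B), key, Category.assoc, IsIso.inv_hom_id, Category.comp_id]

/-- If the unit at `B` admits a retraction, `B` is local. -/
lemma local_of_retraction {B : AddCommGrpCat} (r : T.L.obj B ⟶ B)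
    (hr : T.unit.app B ≫ r = 𝟙 B) : T.Local B := by
  have h1 : T.Local (T.L.obj B) := T.isIso_unit_app B
  obtain ⟨g, hg, hgu⟩ := T.lift_existsUnique h1 (T.unit.app B)
  have e1 : r ≫ T.unit.app B = g :=
    hgu _ (show T.unit.app B ≫ r ≫ T.unit.app B = T.unit.app B by
      rw [← Category.assoc, hr]; exact Category.id_comp _)
  have e2 : 𝟙 (T.L.obj B) = g := hgu _ (Category.comp_id _)
  exact ⟨r, hr, by rw [e1, ← e2]⟩

/-- A retract of a local group is local. -/
lemma local_of_retract {B C : AddCommGrpCat} (i : C ⟶ B) (r : B ⟶ C)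
    (hir : i ≫ r = 𝟙 C) (hB : T.Local B) : T.Local C := by
  have hB' : IsIso (T.unit.app B) := hB
  apply T.local_of_retraction (T.L.map i ≫ inv (T.unit.app B) ≫ r)
  have hnat : i ≫ T.unit.app B = T.unit.app C ≫ T.L.map i := T.unit.naturality i
  rw [← Category.assoc, ← hnat, Category.assoc, IsIso.hom_inv_id_assoc, hir]

end AbLocalization

end Aux

/-- If `⊕_κ D` is `L`-local for some infinite `κ`, then `⊕_α D` is `L`-local for every
infinite `α`.  Here `⊕_κ D = D^κ_{<ω}` is the finitely supported part of `∏_κ D`. -/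
theorem local_directSum_all (T : AbLocalization) (D : Type) [AddCommGroup D]
    (κ : Cardinal) (hκ : Cardinal.aleph0 ≤ κ)
    (h : T.Local (AddCommGrpCat.of ↥(boundedSupport κ.out D Cardinal.aleph0 le_rfl)))
    (α : Cardinal) (hα : Cardinal.aleph0 ≤ α) :
    T.Local (AddCommGrpCat.of ↥(boundedSupport α.out D Cardinal.aleph0 le_rfl)) := by
  classical
  -- objects
  set A : AddCommGrpCat := AddCommGrpCat.of ↥(dirSum α.out D) with hA
  set K : AddCommGrpCat := AddCommGrpCat.of ↥(dirSum κ.out D) with hK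
  set E : AddCommGrpCat := AddCommGrpCat.of ↥(dirSum ℕ D) with hEdef
  set Dobj : AddCommGrpCat := AddCommGrpCat.of D with hDdef
  -- an embedding of ℕ into κ.out
  have hκinf : Infinite κ.out := by
    rw [← Cardinal.aleph0_le_mk_iff, Cardinal.mk_out]; exact hκ
  let uκ : ℕ ↪ κ.out := Infinite.natEmbedding κ.out
  -- E is local as a retract of K
  have hE : T.Local E := by
    refine T.local_of_retract (AddCommGrpCat.ofHom (extendHom uκ uκ.injective))
      (AddCommGrpCat.ofHom (restrictHom uκ uκ.injective)) ?_ h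
    ext x
    exact congrFun (congrArg Subtype.val (restrict_extend uκ uκ.injective x)) _
  -- D is local as a retract of K
  have hD : T.Local Dobj := by
    refine T.local_of_retract (AddCommGrpCat.ofHom (singleHom (uκ 0)))
      (AddCommGrpCat.ofHom (evalHom (uκ 0))) ?_ h
    ext d
    show (singleHom (uκ 0) d : ↥(dirSum κ.out D)).1 (uκ 0) = d
    simp [singleHom]
  -- lifts of evaluations
  let Gi : α.out → (T.L.obj A ⟶ Dobj) :=
    fun i => (T.lift_existsUnique hD (AddCommGrpCat.ofHom (evalHom i))).choose
  have hGi : ∀ i, T.unit.app A ≫ Gi i = AddCommGrpCat.ofHom (evalHom i) :=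
    fun i => (T.lift_existsUnique hD (AddCommGrpCat.ofHom (evalHom i))).choose_spec.1
  have hGiu : ∀ i (g : T.L.obj A ⟶ Dobj),
      T.unit.app A ≫ g = AddCommGrpCat.ofHom (evalHom i) → g = Gi i :=
    fun i => (T.lift_existsUnique hD (AddCommGrpCat.ofHom (evalHom i))).choose_spec.2
  -- finite support of the candidate retraction
  have hfin : ∀ x : T.L.obj A, {i : α.out | Gi i x ≠ 0}.Finite := by
    intro x
    by_contra hinf
    let e : ℕ ↪ {i : α.out | Gi i x ≠ 0} :=
      (show Set.Infinite {i : α.out | Gi i x ≠ 0} from hinf).natEmbedding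
    let e' : ℕ → α.out := fun n => (e n).1
    have he' : Function.Injective e' := fun m n hmn => e.injective (Subtype.ext hmn)
    -- lift of the restriction to the countable set
    obtain ⟨ge, hge, _⟩ := T.lift_existsUnique hE
      (AddCommGrpCat.ofHom (restrictHom e' he') : A ⟶ E)
    -- compatibility of lifts
    have hcomp : ∀ n : ℕ, ge ≫ AddCommGrpCat.ofHom (evalHom n : ↥(dirSum ℕ D) →+ D) = Gi (e' n) := by
      intro n
      apply hGiu
      rw [← Category.assoc, hge]
      ext a
      rfl
    -- so Gi (e' n) x = (ge x).1 n ≠ 0 for every n, contradicting finite support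
    have hall : ∀ n : ℕ, (ge x : ↥(dirSum ℕ D)).1 n ≠ 0 := by
      intro n
      have h1 : Gi (e' n) x ≠ 0 := (e n).2
      have h2 : Gi (e' n) x = (ge x : ↥(dirSum ℕ D)).1 n := by
        rw [← hcomp n]; rfl
      rw [h2] at h1
      exact h1
    have hfs : {n : ℕ | (ge x : ↥(dirSum ℕ D)).1 n ≠ 0}.Finite :=
      mem_dirSum_iff.1 (ge x : ↥(dirSum ℕ D)).2
    have : {n : ℕ | (ge x : ↥(dirSum ℕ D)).1 n ≠ 0} = Set.univ := by
      ext n; simp [hall n]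
    rw [this] at hfs
    exact Set.infinite_univ hfs
  -- the retraction
  let rhom : ↥(T.L.obj A) →+ ↥(dirSum α.out D) :=
    { toFun := fun x => ⟨fun i => Gi i x, mem_dirSum_iff.2 (hfin x)⟩
      map_zero' := Subtype.ext (by
        funext i
        exact (Gi i).hom.map_zero)
      map_add' := fun x y => Subtype.ext (by
        funext i
        exact (Gi i).hom.map_add x y) }
  refine T.local_of_retraction (AddCommGrpCat.ofHom rhom) ?_
  refine AddCommGrpCat.ext fun a => ?_
  apply Subtype.ext
  funext i
  show Gi i (T.unit.app A a) = a.1 i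
  have := ConcreteCategory.congr_hom (hGi i) a
  exact this
end

section
/- Let f : A → B be a homomorphism of abelian groups and κ an infinite regular cardinal greater than the number of generators of A (i.e., A is generated by fewer than κ elements). If D is f-local, then D^κ_{<κ}, the subgroup of ∏_κ D of functions with support of cardinality less than κ, is f-local. -/
-- preamble for localization-based statements
open CategoryTheory Cardinal

/-- If `κ` is an infinite regular cardinal greater than the number of generators of `A`
and `D` is `f`-local, then `D^κ_{<κ}` is `f`-local. -/
theorem boundedSupport_f_local {A B : AddCommGrpCat} (f : A ⟶ B)
    (κ : Cardinal) (hκ : κ.IsRegular)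
    (S : Set A) (hgen : AddSubgroup.closure S = ⊤) (hS : Cardinal.mk S < κ)
    (D : Type) [AddCommGroup D] (hD : Orthogonal f (AddCommGrpCat.of D)) :
    Orthogonal f (AddCommGrpCat.of ↥(boundedSupport κ.out D κ hκ.aleph0_le)) := by
  set ι := κ.out
  set G := boundedSupport ι D κ hκ.aleph0_le with hG
  -- evaluation hom
  have hinj : Function.Injective (fun g : B ⟶ AddCommGrpCat.of D => f ≫ g) := hD.1
  have hsurj : Function.Surjective (fun g : B ⟶ AddCommGrpCat.of D => f ≫ g) := hD.2
  -- eval at i as hom from G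
  let e : ι → (↥G →+ D) := fun i =>
    (Pi.evalAddMonoidHom (fun _ : ι => D) i).comp G.subtype
  constructor
  · intro g₁ g₂ h
    ext b
    have : ∀ i, (e i : ↥G →+ D) (g₁.hom b) = e i (g₂.hom b) := by
      intro i
      have := hinj (a₁ := g₁ ≫ (AddCommGrpCat.ofHom (e i)))
        (a₂ := g₂ ≫ (AddCommGrpCat.ofHom (e i))) ?_
      · exact congrArg (fun (φ : B ⟶ AddCommGrpCat.of D) => φ b) this
      · simp only [← Category.assoc, h]
    exact this _
  · intro g
    -- h i : B ⟶ D lifting g ≫ e i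
    have lift : ∀ i : ι, ∃ h : B ⟶ AddCommGrpCat.of D,
        f ≫ h = g ≫ (AddCommGrpCat.ofHom (e i)) := fun i =>
      hsurj _
    choose h hh using lift
    -- support set T
    set T : Set ι := ⋃ s : S, {i | (g.hom s).1 i ≠ 0} with hT
    have hTκ : #T < κ := by
      refine lt_of_le_of_lt mk_iUnion_le_sum_mk ?_
      exact Cardinal.sum_lt_of_isRegular hκ hS fun s => (g.hom s).2
    -- every g a has support ⊆ T
    have hsupp : ∀ a : A, ∀ i ∉ T, (g.hom a).1 i = 0 := by
      intro a i hi
      have hle : AddSubgroup.closure S ≤ ((e i).comp g.hom).ker := by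
        refine AddSubgroup.closure_le _ |>.2 fun s hs => ?_
        simp only [SetLike.mem_coe, AddMonoidHom.mem_ker, AddMonoidHom.comp_apply]
        have : i ∉ {j | (g.hom s).1 j ≠ 0} := fun hj =>
          hi (Set.mem_iUnion.2 ⟨⟨s, hs⟩, hj⟩)
        simpa [e] using not_not.mp (fun hcon => this hcon)
      rw [hgen] at hle
      exact hle (AddSubgroup.mem_top a)
    -- for i ∉ T, h i = 0
    have hzero : ∀ i ∉ T, h i = 0 := by
      intro i hi
      apply hinj
      show f ≫ h i = f ≫ 0
      rw [hh i]
      ext a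
      simp only [CategoryTheory.comp_apply, Limits.comp_zero, AddMonoidHom.zero_apply]
      show (e i) (g.hom a) = (0 : B ⟶ AddCommGrpCat.of D) (f a)
      rw [show ((0 : B ⟶ AddCommGrpCat.of D) (f a)) = 0 from rfl]
      exact hsupp a i hi
    -- build H
    refine ⟨AddCommGrpCat.ofHom (AddMonoidHom.mk' (fun b => ⟨fun i => (h i).hom b, ?_⟩) ?_), ?_⟩
    · refine lt_of_le_of_lt (Cardinal.mk_le_mk_of_subset (fun i hi => ?_)) hTκ
      by_contra hiT
      refine hi ?_
      show (h i).hom _ = 0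
      rw [hzero i hiT]
      rfl
    · intro b c
      exact Subtype.ext (funext fun i => by simp)
    · ext a
      rename_i i
      have := congrArg (fun (φ : A ⟶ AddCommGrpCat.of D) => φ a) (hh i)
      simpa [e] using this
end
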